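/- Let 0<q<1 and ν > 0. The Jackson integral ∫_{-1}^1 (q²z²;q²)_∞/(q^{2ν+1}z²;q²)_∞ d_q z, i.e. 2(1-q)Σ_{m=0}^∞ q^m (q^{2m+2};q²)_∞/(q^{2ν+2m+1};q²)_∞, equals (2/(1+q))·B_{q²}(ν+1/2, 1/2), where B_{q²}(s,t) = Γ_{q²}(s)Γ_{q²}(t)/Γ_{q²}(s+t) and Γ_{q²}(s) = ((q²;q²)_∞/(q^{2s};q²)_∞)(1-q²)^{1-s}. -/

import Mathlib

/-- The infinite q-Pochhammer symbol over the reals. -/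
noncomputable def qpR (q x : ℝ) : ℝ := ∏' n : ℕ, (1 - x * q ^ n)

/-- The q²-gamma function `Γ_{q²}(s) = ((q²;q²)_∞/(q^{2s};q²)_∞)(1-q²)^{1-s}`. -/
noncomputable def qGamma2 (q s : ℝ) : ℝ :=
  qpR (q ^ 2) (q ^ 2) / qpR (q ^ 2) (q ^ (2 * s)) * (1 - q ^ 2) ^ (1 - s)

/-- The q²-beta function. -/
noncomputable def qBeta2 (q s t : ℝ) : ℝ :=
  qGamma2 q s * qGamma2 q t / qGamma2 q (s + t)

open Real Filter Finset

section QBinom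

variable {Q x a z w : ℝ}

private lemma fac_pos (hQ0 : 0 ≤ Q) (hQ1 : Q < 1) (hx0 : 0 ≤ x) (hx1 : x < 1) (n : ℕ) :
    0 < 1 - x * Q ^ n := by
  have h1 : Q ^ n ≤ 1 := pow_le_one₀ hQ0 hQ1.le
  nlinarith [pow_nonneg hQ0 n]

private lemma neg_log_one_sub_le {t c : ℝ} (ht0 : 0 ≤ t) (htc : t ≤ c) (hc : c < 1) :
    -Real.log (1 - t) ≤ t / (1 - c) := by
  have h1 : 0 < 1 - t := by linarith
  have h2 : Real.log (1 - t)⁻¹ ≤ (1 - t)⁻¹ - 1 := Real.log_le_sub_one_of_pos (by positivity)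
  rw [Real.log_inv] at h2
  have h3 : (1 - t)⁻¹ - 1 = t / (1 - t) := by field_simp; ring
  have h4 : t / (1 - t) ≤ t / (1 - c) := by
    apply div_le_div_of_nonneg_left ht0 (by linarith) (by linarith)
  rw [h3] at h2
  linarith

private lemma summable_log_one_sub (hQ0 : 0 ≤ Q) (hQ1 : Q < 1) (hx0 : 0 ≤ x) (hx1 : x < 1) :
    Summable fun n : ℕ => Real.log (1 - x * Q ^ n) := by
  have hb : Summable (fun n : ℕ => x / (1 - x) * Q ^ n) :=
    (summable_geometric_of_lt_one hQ0 hQ1).mul_left _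
  have h : Summable fun n : ℕ => -Real.log (1 - x * Q ^ n) := by
    refine Summable.of_nonneg_of_le (fun n => ?_) (fun n => ?_) hb
    · have h1 : 0 < 1 - x * Q ^ n := fac_pos hQ0 hQ1 hx0 hx1 n
      have h2 : Q ^ n ≤ 1 := pow_le_one₀ hQ0 hQ1.le
      have : Real.log (1 - x * Q ^ n) ≤ 0 :=
        Real.log_nonpos h1.le (by nlinarith [pow_nonneg hQ0 n])
      linarith
    · have h2 : Q ^ n ≤ 1 := pow_le_one₀ hQ0 hQ1.le
      have ht0 : 0 ≤ x * Q ^ n := mul_nonneg hx0 (pow_nonneg hQ0 n)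
      have htc : x * Q ^ n ≤ x := by nlinarith
      calc -Real.log (1 - x * Q ^ n) ≤ (x * Q ^ n) / (1 - x) := neg_log_one_sub_le ht0 htc hx1
        _ = x / (1 - x) * Q ^ n := by ring
  simpa using h.neg

private lemma hasProd_qpR (hQ0 : 0 ≤ Q) (hQ1 : Q < 1) (hx0 : 0 ≤ x) (hx1 : x < 1) :
    HasProd (fun n : ℕ => 1 - x * Q ^ n)
      (Real.exp (∑' n : ℕ, Real.log (1 - x * Q ^ n))) := by
  have h := ((summable_log_one_sub hQ0 hQ1 hx0 hx1).hasSum).rexp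
  have hfun : (rexp ∘ fun n : ℕ => Real.log (1 - x * Q ^ n)) =
      fun n : ℕ => 1 - x * Q ^ n := by
    funext n
    exact Real.exp_log (fac_pos hQ0 hQ1 hx0 hx1 n)
  rwa [hfun] at h

private lemma multipliable_qpR (hQ0 : 0 ≤ Q) (hQ1 : Q < 1) (hx0 : 0 ≤ x) (hx1 : x < 1) :
    Multipliable fun n : ℕ => 1 - x * Q ^ n :=
  ⟨_, hasProd_qpR hQ0 hQ1 hx0 hx1⟩

private lemma qpR_pos (hQ0 : 0 ≤ Q) (hQ1 : Q < 1) (hx0 : 0 ≤ x) (hx1 : x < 1) :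
    0 < qpR Q x := by
  rw [qpR, (hasProd_qpR hQ0 hQ1 hx0 hx1).tprod_eq]
  exact Real.exp_pos _

private lemma qpR_le_one (hQ0 : 0 ≤ Q) (hQ1 : Q < 1) (hx0 : 0 ≤ x) (hx1 : x < 1) :
    qpR Q x ≤ 1 := by
  rw [qpR, (hasProd_qpR hQ0 hQ1 hx0 hx1).tprod_eq]
  have : (∑' n : ℕ, Real.log (1 - x * Q ^ n)) ≤ 0 := by
    apply tsum_nonpos
    intro n
    have h1 : 0 < 1 - x * Q ^ n := fac_pos hQ0 hQ1 hx0 hx1 n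
    exact Real.log_nonpos h1.le (by nlinarith [pow_nonneg hQ0 n, mul_nonneg hx0 (pow_nonneg hQ0 n)])
  calc Real.exp _ ≤ Real.exp 0 := Real.exp_le_exp.mpr this
    _ = 1 := Real.exp_zero

private lemma qpR_shift (hQ0 : 0 ≤ Q) (hQ1 : Q < 1) (hx0 : 0 ≤ x) (hx1 : x < 1) (m : ℕ) :
    (∏ k ∈ Finset.range m, (1 - x * Q ^ k)) * qpR Q (x * Q ^ m) = qpR Q x := by
  have hxm0 : 0 ≤ x * Q ^ m := mul_nonneg hx0 (pow_nonneg hQ0 m)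
  have hxm1 : x * Q ^ m < 1 := by
    have : Q ^ m ≤ 1 := pow_le_one₀ hQ0 hQ1.le
    nlinarith
  have hm : Multipliable (fun n : ℕ => 1 - x * Q ^ (n + m)) := by
    refine (multipliable_qpR hQ0 hQ1 hxm0 hxm1).congr fun n => ?_
    rw [pow_add]; ring
  have h := Multipliable.prod_mul_tprod_nat_mul' (f := fun n : ℕ => 1 - x * Q ^ n) (k := m) hm
  have h2 : (∏' n : ℕ, (1 - x * Q ^ m * Q ^ n)) = ∏' n : ℕ, (1 - x * Q ^ (n + m)) :=
    tprod_congr fun n => by rw [pow_add]; ring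
  rw [qpR, qpR, h2]
  exact h

/-- Coefficients in the q-binomial theorem. -/
private noncomputable def qc (Q a : ℝ) (m : ℕ) : ℝ :=
  ∏ k ∈ Finset.range m, ((1 - a * Q ^ k) / (1 - Q ^ (k + 1)))

private lemma den_pos (hQ0 : 0 ≤ Q) (hQ1 : Q < 1) (k : ℕ) : 0 < 1 - Q ^ (k + 1) := by
  have : Q ^ (k + 1) ≤ Q := pow_le_of_le_one hQ0 hQ1.le (Nat.succ_ne_zero k)
  linarith

private lemma qc_pos (hQ0 : 0 ≤ Q) (hQ1 : Q < 1) (ha0 : 0 ≤ a) (ha1 : a < 1) (m : ℕ) :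
    0 < qc Q a m := by
  apply Finset.prod_pos
  intro k _
  exact div_pos (fac_pos hQ0 hQ1 ha0 ha1 k) (den_pos hQ0 hQ1 k)

private lemma qc_rec (hQ0 : 0 ≤ Q) (hQ1 : Q < 1) (a : ℝ) (m : ℕ) :
    qc Q a (m + 1) * (1 - Q ^ (m + 1)) = qc Q a m * (1 - a * Q ^ m) := by
  rw [qc, qc, Finset.prod_range_succ, mul_assoc, div_mul_cancel₀ _ (den_pos hQ0 hQ1 m).ne']

private lemma qc_le (hQ0 : 0 ≤ Q) (hQ1 : Q < 1) (ha0 : 0 ≤ a) (ha1 : a < 1) (m : ℕ) :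
    qc Q a m ≤ (qpR Q Q)⁻¹ := by
  have hden : ∀ k, (1 : ℝ) - Q ^ (k + 1) = 1 - Q * Q ^ k := fun k => by rw [pow_succ]; ring
  have hPpos : 0 < ∏ k ∈ Finset.range m, (1 - Q ^ (k + 1)) :=
    Finset.prod_pos fun k _ => den_pos hQ0 hQ1 k
  have hQQ : qpR Q Q ≤ ∏ k ∈ Finset.range m, (1 - Q ^ (k + 1)) := by
    have hsh := qpR_shift hQ0 hQ1 hQ0 hQ1 m
    have htail : qpR Q (Q * Q ^ m) ≤ 1 := by
      apply qpR_le_one hQ0 hQ1 (mul_nonneg hQ0 (pow_nonneg hQ0 m))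
      have : Q ^ m ≤ 1 := pow_le_one₀ hQ0 hQ1.le
      nlinarith
    have hprod : (∏ k ∈ Finset.range m, (1 - Q * Q ^ k)) = ∏ k ∈ Finset.range m, (1 - Q ^ (k + 1)) :=
      Finset.prod_congr rfl fun k _ => (hden k).symm
    rw [hprod] at hsh
    nlinarith [qpR_pos hQ0 hQ1 hQ0 hQ1 (x := Q)]
  have hnum : (∏ k ∈ Finset.range m, (1 - a * Q ^ k)) ≤ 1 := by
    apply Finset.prod_le_one
    · intro k _; exact (fac_pos hQ0 hQ1 ha0 ha1 k).le
    · intro k _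
      have : 0 ≤ a * Q ^ k := mul_nonneg ha0 (pow_nonneg hQ0 k)
      linarith
  calc qc Q a m = (∏ k ∈ Finset.range m, (1 - a * Q ^ k)) /
        ∏ k ∈ Finset.range m, (1 - Q ^ (k + 1)) := Finset.prod_div_distrib _ _
    _ ≤ 1 / ∏ k ∈ Finset.range m, (1 - Q ^ (k + 1)) := by
        gcongr
    _ ≤ 1 / qpR Q Q := by
        apply one_div_le_one_div_of_le (qpR_pos hQ0 hQ1 hQ0 hQ1) hQQ
    _ = (qpR Q Q)⁻¹ := one_div _


/-- Partial generating function for the q-binomial theorem. -/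
private noncomputable def qF (Q a z : ℝ) : ℝ := ∑' m : ℕ, qc Q a m * z ^ m

private lemma summable_qcz (hQ0 : 0 ≤ Q) (hQ1 : Q < 1) (ha0 : 0 ≤ a) (ha1 : a < 1)
    (hz0 : 0 ≤ z) (hz1 : z < 1) : Summable (fun m : ℕ => qc Q a m * z ^ m) := by
  refine Summable.of_nonneg_of_le (fun m => ?_) (fun m => ?_)
    ((summable_geometric_of_lt_one hz0 hz1).mul_left (qpR Q Q)⁻¹)
  · exact mul_nonneg (qc_pos hQ0 hQ1 ha0 ha1 m).le (pow_nonneg hz0 m)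
  · exact mul_le_mul_of_nonneg_right (qc_le hQ0 hQ1 ha0 ha1 m) (pow_nonneg hz0 m)

private lemma qF_funceq (hQ0 : 0 ≤ Q) (hQ1 : Q < 1) (ha0 : 0 ≤ a) (ha1 : a < 1)
    (hz0 : 0 ≤ z) (hz1 : z < 1) :
    (1 - z) * qF Q a z = (1 - a * z) * qF Q a (Q * z) := by
  have hQz0 : 0 ≤ Q * z := mul_nonneg hQ0 hz0
  have hQz1 : Q * z < 1 := by nlinarith
  have sA : Summable (fun m : ℕ => qc Q a m * z ^ m) := summable_qcz hQ0 hQ1 ha0 ha1 hz0 hz1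
  have sB : Summable (fun m : ℕ => qc Q a m * (Q * z) ^ m) :=
    summable_qcz hQ0 hQ1 ha0 ha1 hQz0 hQz1
  have key : (∑' m : ℕ, (qc Q a m * z ^ m - qc Q a m * (Q * z) ^ m)) =
      ∑' m : ℕ, (z * (qc Q a m * z ^ m) - a * z * (qc Q a m * (Q * z) ^ m)) := by
    rw [Summable.tsum_eq_zero_add (sA.sub sB)]
    have h0 : qc Q a 0 * z ^ 0 - qc Q a 0 * (Q * z) ^ 0 = 0 := by simp
    rw [h0, zero_add]
    refine tsum_congr fun m => ?_
    have h := qc_rec hQ0 hQ1 a m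
    linear_combination z ^ (m + 1) * h
  have h1 : (∑' m : ℕ, (qc Q a m * z ^ m - qc Q a m * (Q * z) ^ m)) =
      qF Q a z - qF Q a (Q * z) := Summable.tsum_sub sA sB
  have h2 : (∑' m : ℕ, (z * (qc Q a m * z ^ m) - a * z * (qc Q a m * (Q * z) ^ m))) =
      z * qF Q a z - a * z * qF Q a (Q * z) := by
    rw [Summable.tsum_sub (sA.mul_left z) (sB.mul_left (a * z)), tsum_mul_left, tsum_mul_left]
    rfl
  rw [h1, h2] at key
  linear_combination key

private lemma qF_iter (hQ0 : 0 ≤ Q) (hQ1 : Q < 1) (ha0 : 0 ≤ a) (ha1 : a < 1)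
    (hz0 : 0 ≤ z) (hz1 : z < 1) (n : ℕ) :
    qF Q a z * ∏ k ∈ Finset.range n, (1 - z * Q ^ k) =
      (∏ k ∈ Finset.range n, (1 - a * z * Q ^ k)) * qF Q a (Q ^ n * z) := by
  induction n with
  | zero => simp
  | succ n ih =>
    have hz'0 : 0 ≤ Q ^ n * z := mul_nonneg (pow_nonneg hQ0 n) hz0
    have hz'1 : Q ^ n * z < 1 := by
      have : Q ^ n ≤ 1 := pow_le_one₀ hQ0 hQ1.le
      nlinarith
    have hf := qF_funceq hQ0 hQ1 ha0 ha1 hz'0 hz'1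
    have harg : Q * (Q ^ n * z) = Q ^ (n + 1) * z := by ring
    rw [harg] at hf
    rw [Finset.prod_range_succ, Finset.prod_range_succ, ← mul_assoc, ih]
    have : (1 - z * Q ^ n) = (1 - Q ^ n * z) := by ring
    calc (∏ k ∈ Finset.range n, (1 - a * z * Q ^ k)) * qF Q a (Q ^ n * z) * (1 - z * Q ^ n)
        = (∏ k ∈ Finset.range n, (1 - a * z * Q ^ k)) *
            ((1 - Q ^ n * z) * qF Q a (Q ^ n * z)) := by ring
      _ = (∏ k ∈ Finset.range n, (1 - a * z * Q ^ k)) *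
            ((1 - a * (Q ^ n * z)) * qF Q a (Q ^ (n + 1) * z)) := by rw [hf]
      _ = (∏ k ∈ Finset.range n, (1 - a * z * Q ^ k)) * (1 - a * z * Q ^ n) *
            qF Q a (Q ^ (n + 1) * z) := by ring

private lemma qF_bound (hQ0 : 0 ≤ Q) (hQ1 : Q < 1) (ha0 : 0 ≤ a) (ha1 : a < 1)
    (hz1 : z < 1) (hw0 : 0 ≤ w) (hwz : w ≤ z) :
    1 ≤ qF Q a w ∧ qF Q a w ≤ 1 + (qpR Q Q)⁻¹ * (1 - z)⁻¹ * w := by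
  have hw1 : w < 1 := lt_of_le_of_lt hwz hz1
  have hz0 : 0 ≤ z := le_trans hw0 hwz
  have sW : Summable (fun m : ℕ => qc Q a m * w ^ m) := summable_qcz hQ0 hQ1 ha0 ha1 hw0 hw1
  have hsplit : qF Q a w = 1 + ∑' m : ℕ, qc Q a (m + 1) * w ^ (m + 1) := by
    rw [qF, Summable.tsum_eq_zero_add sW]
    simp [qc]
  have hsTail : Summable (fun m : ℕ => qc Q a (m + 1) * w ^ (m + 1)) := by
    have := (summable_nat_add_iff 1).2 sW
    exact this
  have hP : 0 < qpR Q Q := qpR_pos hQ0 hQ1 hQ0 hQ1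
  constructor
  · rw [hsplit]
    have : 0 ≤ ∑' m : ℕ, qc Q a (m + 1) * w ^ (m + 1) :=
      tsum_nonneg fun m => mul_nonneg (qc_pos hQ0 hQ1 ha0 ha1 _).le (pow_nonneg hw0 _)
    linarith
  · rw [hsplit]
    have hle : (∑' m : ℕ, qc Q a (m + 1) * w ^ (m + 1)) ≤
        ∑' m : ℕ, (qpR Q Q)⁻¹ * w * z ^ m := by
      refine Summable.tsum_le_tsum (fun m => ?_) hsTail
        (((summable_geometric_of_lt_one hz0 hz1)).mul_left _)
      have h1 : qc Q a (m + 1) ≤ (qpR Q Q)⁻¹ := qc_le hQ0 hQ1 ha0 ha1 (m + 1)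
      have h2 : w ^ (m + 1) ≤ w * z ^ m := by
        rw [pow_succ']
        exact mul_le_mul_of_nonneg_left (pow_le_pow_left₀ hw0 hwz m) hw0
      calc qc Q a (m + 1) * w ^ (m + 1) ≤ (qpR Q Q)⁻¹ * w ^ (m + 1) :=
            mul_le_mul_of_nonneg_right h1 (pow_nonneg hw0 _)
        _ ≤ (qpR Q Q)⁻¹ * (w * z ^ m) := by
            exact mul_le_mul_of_nonneg_left h2 (by positivity)
        _ = (qpR Q Q)⁻¹ * w * z ^ m := by ring
    have hgeo : (∑' m : ℕ, (qpR Q Q)⁻¹ * w * z ^ m) = (qpR Q Q)⁻¹ * w * (1 - z)⁻¹ := by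
      rw [tsum_mul_left, tsum_geometric_of_lt_one hz0 hz1]
    rw [hgeo] at hle
    nlinarith

private lemma qF_tendsto (hQ0 : 0 ≤ Q) (hQ1 : Q < 1) (ha0 : 0 ≤ a) (ha1 : a < 1)
    (hz0 : 0 ≤ z) (hz1 : z < 1) :
    Tendsto (fun n : ℕ => qF Q a (Q ^ n * z)) atTop (nhds 1) := by
  have hbd : ∀ n : ℕ, 1 ≤ qF Q a (Q ^ n * z) ∧
      qF Q a (Q ^ n * z) ≤ 1 + (qpR Q Q)⁻¹ * (1 - z)⁻¹ * (Q ^ n * z) := by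
    intro n
    refine qF_bound hQ0 hQ1 ha0 ha1 hz1 (mul_nonneg (pow_nonneg hQ0 n) hz0) ?_
    have : Q ^ n ≤ 1 := pow_le_one₀ hQ0 hQ1.le
    nlinarith
  have hupper : Tendsto (fun n : ℕ => 1 + (qpR Q Q)⁻¹ * (1 - z)⁻¹ * (Q ^ n * z))
      atTop (nhds 1) := by
    have h := (tendsto_pow_atTop_nhds_zero_of_lt_one hQ0 hQ1).const_mul
      ((qpR Q Q)⁻¹ * (1 - z)⁻¹ * z)
    have h2 := h.const_add 1
    simp only [mul_zero, add_zero] at h2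
    refine h2.congr fun n => by ring
  exact tendsto_of_tendsto_of_tendsto_of_le_of_le tendsto_const_nhds hupper
    (fun n => (hbd n).1) (fun n => (hbd n).2)

/-- The q-binomial theorem. -/
private lemma qF_eq (hQ0 : 0 ≤ Q) (hQ1 : Q < 1) (ha0 : 0 ≤ a) (ha1 : a < 1)
    (hz0 : 0 ≤ z) (hz1 : z < 1) :
    qF Q a z = qpR Q (a * z) / qpR Q z := by
  have haz0 : 0 ≤ a * z := mul_nonneg ha0 hz0
  have haz1 : a * z < 1 := by nlinarith
  have h1 : Tendsto (fun n : ℕ => qF Q a z * ∏ k ∈ Finset.range n, (1 - z * Q ^ k))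
      atTop (nhds (qF Q a z * qpR Q z)) := by
    exact tendsto_const_nhds.mul (multipliable_qpR hQ0 hQ1 hz0 hz1).hasProd.tendsto_prod_nat
  have h2 : Tendsto (fun n : ℕ => (∏ k ∈ Finset.range n, (1 - a * z * Q ^ k)) *
      qF Q a (Q ^ n * z)) atTop (nhds (qpR Q (a * z) * 1)) := by
    exact (multipliable_qpR hQ0 hQ1 haz0 haz1).hasProd.tendsto_prod_nat.mul
      (qF_tendsto hQ0 hQ1 ha0 ha1 hz0 hz1)
  have heq := tendsto_nhds_unique
    (h1.congr fun n => qF_iter hQ0 hQ1 ha0 ha1 hz0 hz1 n) h2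
  have hzpos : 0 < qpR Q z := qpR_pos hQ0 hQ1 hz0 hz1
  rw [eq_div_iff hzpos.ne']
  linarith

end QBinom

theorem stmt19 (q ν : ℝ) (hq0 : 0 < q) (hq1 : q < 1) (hν : 0 < ν) :
    2 * (1 - q) * ∑' m : ℕ,
        q ^ (m : ℝ) * qpR (q ^ 2) (q ^ (2 * (m : ℝ) + 2)) /
          qpR (q ^ 2) (q ^ (2 * ν + 2 * (m : ℝ) + 1)) =
      2 / (1 + q) * qBeta2 q (ν + 1 / 2) (1 / 2) := by
  have hq0' : (0:ℝ) ≤ q := hq0.le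
  set Q : ℝ := q ^ 2 with hQdef
  have hQ0 : 0 ≤ Q := by positivity
  have hQ1 : Q < 1 := by rw [hQdef]; nlinarith
  set A : ℝ := q ^ (2 * ν + 1 : ℝ) with hAdef
  have hA0 : 0 < A := Real.rpow_pos_of_pos hq0 _
  have hA1 : A < 1 := Real.rpow_lt_one hq0' hq1 (by linarith)
  have hPQ : 0 < qpR Q Q := qpR_pos hQ0 hQ1 hQ0 hQ1
  have hPA : 0 < qpR Q A := qpR_pos hQ0 hQ1 hA0.le hA1
  have hPq : 0 < qpR Q q := qpR_pos hQ0 hQ1 hq0' hq1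
  have hAq1 : A * q < 1 := by nlinarith
  have hPAq : 0 < qpR Q (A * q) := qpR_pos hQ0 hQ1 (by positivity) hAq1
  have hterm : ∀ m : ℕ,
      q ^ (m : ℝ) * qpR Q (q ^ (2 * (m : ℝ) + 2)) / qpR Q (q ^ (2 * ν + 2 * (m : ℝ) + 1))
        = (qpR Q Q / qpR Q A) * (qc Q A m * q ^ m) := by
    intro m
    have hQm1 : Q ^ m ≤ 1 := pow_le_one₀ hQ0 hQ1.le
    have e1 : q ^ ((m : ℕ) : ℝ) = q ^ m := Real.rpow_natCast q m
    have e2 : q ^ (2 * (m : ℝ) + 2) = Q * Q ^ m := by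
      rw [show (2 * (m : ℝ) + 2) = ((2 * m + 2 : ℕ) : ℝ) by push_cast; ring,
        Real.rpow_natCast, hQdef, ← pow_mul]
      ring_nf
    have e3 : q ^ (2 * ν + 2 * (m : ℝ) + 1) = A * Q ^ m := by
      rw [show (2 * ν + 2 * (m : ℝ) + 1) = (2 * ν + 1) + ((2 * m : ℕ) : ℝ) by push_cast; ring,
        Real.rpow_add hq0, Real.rpow_natCast, hAdef, hQdef, ← pow_mul]
    have hsQ := qpR_shift hQ0 hQ1 hQ0 hQ1 m
    have hsA := qpR_shift hQ0 hQ1 hA0.le hA1 m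
    have pQm : 0 < qpR Q (Q * Q ^ m) :=
      qpR_pos hQ0 hQ1 (by positivity) (by nlinarith)
    have pAm : 0 < qpR Q (A * Q ^ m) :=
      qpR_pos hQ0 hQ1 (by positivity) (by nlinarith)
    have pPm : 0 < ∏ k ∈ Finset.range m, (1 - Q * Q ^ k) :=
      Finset.prod_pos fun k _ => fac_pos hQ0 hQ1 hQ0 hQ1 k
    have pRm : 0 < ∏ k ∈ Finset.range m, (1 - A * Q ^ k) :=
      Finset.prod_pos fun k _ => fac_pos hQ0 hQ1 hA0.le hA1 k
    have hqc : qc Q A m = (∏ k ∈ Finset.range m, (1 - A * Q ^ k)) /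
        ∏ k ∈ Finset.range m, (1 - Q * Q ^ k) := by
      rw [qc, Finset.prod_div_distrib]
      congr 1
      exact Finset.prod_congr rfl fun k _ => by rw [pow_succ]; ring
    rw [e1, e2, e3, hqc, ← hsQ, ← hsA]
    field_simp
  rw [tsum_congr hterm, tsum_mul_left]
  have hqF : (∑' m : ℕ, qc Q A m * q ^ m) = qpR Q (A * q) / qpR Q q := by
    have h := qF_eq hQ0 hQ1 hA0.le hA1 hq0' hq1
    rwa [qF] at h
  rw [hqF]
  have h1Q : 0 < 1 - Q := by linarith
  have r1 : q ^ (2 * (ν + 1 / 2)) = A := by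
    rw [show 2 * (ν + 1 / 2) = 2 * ν + 1 by ring, hAdef]
  have r2 : q ^ (2 * (1 / 2 : ℝ)) = q := by
    rw [show 2 * (1 / 2 : ℝ) = 1 by norm_num, Real.rpow_one]
  have r3 : q ^ (2 * (ν + 1 / 2 + 1 / 2)) = A * q := by
    rw [show 2 * (ν + 1 / 2 + 1 / 2) = (2 * ν + 1) + 1 by ring, Real.rpow_add hq0,
      Real.rpow_one, hAdef]
  have hB : (1 - Q) ^ (1 - (ν + 1 / 2)) * (1 - Q) ^ (1 - (1 / 2 : ℝ)) =
      (1 - Q) * (1 - Q) ^ (1 - (ν + 1 / 2 + 1 / 2)) := by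
    rw [← Real.rpow_add h1Q,
      show (1 - (ν + 1 / 2)) + (1 - (1 / 2 : ℝ)) = 1 + (1 - (ν + 1 / 2 + 1 / 2)) by ring,
      Real.rpow_add h1Q, Real.rpow_one]
  have hB3 : 0 < (1 - Q) ^ (1 - (ν + 1 / 2 + 1 / 2)) := Real.rpow_pos_of_pos h1Q _
  have hBeta : qBeta2 q (ν + 1 / 2) (1 / 2) =
      (1 - Q) * (qpR Q Q * qpR Q (A * q)) / (qpR Q A * qpR Q q) := by
    rw [qBeta2, qGamma2, qGamma2, qGamma2, ← hQdef, r1, r2, r3]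
    rw [div_eq_div_iff (by positivity) (by positivity)]
    have hB' : (1 - Q) ^ ((2 - (ν * 2 + 1)) / 2) * (1 - Q) ^ (((2:ℝ) - 1) / 2) =
        (1 - Q) * (1 - Q) ^ ((2 - (ν * 2 + 1 + 1)) / 2) := by
      rw [show (2 - (ν * 2 + 1)) / 2 = 1 - (ν + 1 / 2) by ring,
        show ((2:ℝ) - 1) / 2 = 1 - (1 / 2 : ℝ) by norm_num,
        show (2 - (ν * 2 + 1 + 1)) / 2 = 1 - (ν + 1 / 2 + 1 / 2) by ring]
      exact hB
    field_simp
    linear_combination hB'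
  rw [hBeta]
  have hq1' : 0 < 1 + q := by linarith
  have hfac : 1 - Q = (1 - q) * (1 + q) := by rw [hQdef]; ring
  rw [hfac]
  field_simp
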